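/- Suppose N' : [4π, ∞) → ℝ is nondecreasing with N'(x) = (x/2π)·log(x/4π) − x/2π + R(x) where |R(x)| ≤ C·log x for some constant C > 0 and all x ≥ 4π, and N'(4π) = 0. Then there is a constant C' such that for all sufficiently large t, ∫_{t+1}^∞ dN'(x)/(x² − t²) ≤ C'·(log t)²/t. -/

import Mathlib

open Real MeasureTheory Filter
open scoped ENNReal

lemma nprime_diff_bound (N' : StieltjesFunction ℝ) (R : ℝ → ℝ) (C : ℝ) (hC : 0 < C)
    (hmain : ∀ x : ℝ, 4 * π ≤ x →
      N' x = x / (2 * π) * Real.log (x / (4 * π)) - x / (2 * π) + R x)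
    (hR : ∀ x : ℝ, 4 * π ≤ x → |R x| ≤ C * Real.log x)
    {a b : ℝ} (ha : 4 * π ≤ a) (hab : a ≤ b) :
    N' b - N' a ≤ (b - a) * (Real.log b + 1) / (2 * π) + 2 * C * Real.log b := by
  have hπ : 0 < π := Real.pi_pos
  have ha0 : 0 < a := by nlinarith
  have hb0 : 0 < b := lt_of_lt_of_le ha0 hab
  have hb : 4 * π ≤ b := le_trans ha hab
  have h4 : (0:ℝ) < 4 * π := by positivity
  have e1 : N' b - N' a =
      (b * Real.log (b / (4 * π)) - b - (a * Real.log (a / (4 * π)) - a)) / (2 * π)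
        + (R b - R a) := by
    rw [hmain b hb, hmain a ha]; field_simp; ring
  have hldb : Real.log (b / (4 * π)) = Real.log b - Real.log (4 * π) :=
    Real.log_div hb0.ne' h4.ne'
  have hlda : Real.log (a / (4 * π)) = Real.log a - Real.log (4 * π) :=
    Real.log_div ha0.ne' h4.ne'
  have hsub : Real.log b - Real.log a ≤ b / a - 1 := by
    have h := Real.log_le_sub_one_of_pos (show 0 < b / a by positivity)
    rwa [Real.log_div hb0.ne' ha0.ne'] at h
  have hmul : a * (b / a - 1) = b - a := by field_simp
  have h1 : a * Real.log b - a * Real.log a ≤ b - a := by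
    calc a * Real.log b - a * Real.log a = a * (Real.log b - Real.log a) := by ring
      _ ≤ a * (b / a - 1) := by
          exact mul_le_mul_of_nonneg_left hsub ha0.le
      _ = b - a := hmul
  have hlog4 : 0 ≤ Real.log (4 * π) := Real.log_nonneg (by nlinarith [Real.pi_gt_three])
  have hloga : Real.log a ≤ Real.log b := Real.log_le_log ha0 hab
  have hRa := abs_le.mp (hR a ha)
  have hRb := abs_le.mp (hR b hb)
  have hlogb0 : 0 ≤ Real.log b := Real.log_nonneg (by nlinarith [Real.pi_gt_three])
  have key : b * Real.log (b / (4 * π)) - b - (a * Real.log (a / (4 * π)) - a)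
      ≤ (b - a) * (Real.log b + 1) := by
    rw [hldb, hlda]
    nlinarith [h1, mul_nonneg (sub_nonneg.2 hab) hlog4]
  have h2 : R b - R a ≤ 2 * C * Real.log b := by
    nlinarith [hRa.1, hRb.2, mul_le_mul_of_nonneg_left hloga hC.le]
  rw [e1]
  have h3 : (b * Real.log (b / (4 * π)) - b - (a * Real.log (a / (4 * π)) - a)) / (2 * π)
      ≤ (b - a) * (Real.log b + 1) / (2 * π) := by
    exact (div_le_div_iff_of_pos_right (by positivity)).mpr key
  linarith

lemma nprime_upper_bound (N' : StieltjesFunction ℝ) (R : ℝ → ℝ) (C : ℝ) (hC : 0 < C)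
    (hmain : ∀ x : ℝ, 4 * π ≤ x →
      N' x = x / (2 * π) * Real.log (x / (4 * π)) - x / (2 * π) + R x)
    (hR : ∀ x : ℝ, 4 * π ≤ x → |R x| ≤ C * Real.log x)
    {r : ℝ} (hr : 4 * π ≤ r) :
    N' r ≤ (r / (2 * π) + C) * Real.log r := by
  have hπ : 0 < π := Real.pi_pos
  have hr0 : 0 < r := by nlinarith
  have h4 : (0:ℝ) < 4 * π := by positivity
  rw [hmain r hr, Real.log_div hr0.ne' h4.ne']
  have hRr := (abs_le.mp (hR r hr)).2
  have hlog4 : 0 ≤ Real.log (4 * π) := Real.log_nonneg (by nlinarith [Real.pi_gt_three])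
  have hq : 0 ≤ r / (2 * π) := by positivity
  nlinarith [mul_nonneg hq hlog4]

set_option maxHeartbeats 2000000 in
theorem stieltjes_tail_integral_bound
    (N' : StieltjesFunction ℝ) (R : ℝ → ℝ) (C : ℝ) (hC : 0 < C)
    (hzero : ∀ x : ℝ, x ≤ 4 * π → N' x = 0)
    (hmain : ∀ x : ℝ, 4 * π ≤ x →
      N' x = x / (2 * π) * Real.log (x / (4 * π)) - x / (2 * π) + R x)
    (hR : ∀ x : ℝ, 4 * π ≤ x → |R x| ≤ C * Real.log x) :
    ∃ C' t₀ : ℝ, ∀ t : ℝ, t₀ ≤ t →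
      ∫ x in Set.Ioi (t + 1), 1 / (x ^ 2 - t ^ 2) ∂N'.measure
        ≤ C' * (Real.log t) ^ 2 / t := by
  refine ⟨20 * (1 + C), 13, fun t ht => ?_⟩
  have hπ : 0 < π := Real.pi_pos
  have hπ3 : π < 3.15 := Real.pi_lt_d2
  have hπ3' : 3 < π := Real.pi_gt_three
  have ht1 : (0:ℝ) < t := by linarith
  have h4πt : 4 * π ≤ t + 1 := by nlinarith
  have hlt2 : 2 ≤ Real.log t := by
    have he : Real.exp 2 < 13 := by
      have h1 := Real.exp_one_lt_d9
      have h2 : Real.exp 2 = Real.exp 1 * Real.exp 1 := by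
        rw [← Real.exp_add]; norm_num
      nlinarith [Real.exp_pos 1]
    calc (2:ℝ) = Real.log (Real.exp 2) := (Real.log_exp 2).symm
      _ ≤ Real.log 13 := Real.log_le_log (Real.exp_pos 2) he.le
      _ ≤ Real.log t := Real.log_le_log (by norm_num) ht
  have hlt0 : 0 < Real.log t := by linarith
  -- nonnegativity of N' at t+1
  have hN0 : 0 ≤ N' (t + 1) := by
    rw [← hzero (4 * π) le_rfl]
    exact N'.mono h4πt
  set g : ℝ → ℝ := fun x => 1 / (x ^ 2 - t ^ 2) with hg_def
  have hg_meas : Measurable g :=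
    Measurable.div measurable_const ((measurable_id.pow_const 2).sub measurable_const)
  have hg_nn : 0 ≤ᵐ[N'.measure.restrict (Set.Ioi (t + 1))] g := by
    refine (ae_restrict_iff' measurableSet_Ioi).mpr (ae_of_all _ fun x hx => ?_)
    have hx' : t + 1 < x := hx
    show (0:ℝ) ≤ g x
    rw [hg_def]
    have h2 : 0 < x ^ 2 - t ^ 2 := by nlinarith
    positivity
  set s1 : ℝ := (t ^ 2)⁻¹ with hs1_def
  set S : ℝ := (2 * t + 1)⁻¹ with hS_def
  have hs10 : 0 < s1 := by positivity
  have hS0 : 0 < S := by positivity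
  have hs1S : s1 ≤ S := by
    apply inv_anti₀ (by positivity)
    nlinarith
  set r : ℝ → ℝ := fun s => Real.sqrt (t ^ 2 + 1 / s) with hr_def
  set m : ℝ → ℝ≥0∞ :=
    fun s => (N'.measure.restrict (Set.Ioi (t + 1))) {a | s < g a} with hm_def
  -- the upper bound functions
  set f1 : ℝ → ℝ := fun s =>
    3 * (1 + C) * (Real.log t * s ^ (-(1/2) : ℝ) + t ^ (-(1/2) : ℝ) * s ^ (-(3/4) : ℝ))
    with hf1_def
  set f2 : ℝ → ℝ := fun s =>
    3 * Real.log t / (4 * π * t) * s⁻¹ + 4 * C * Real.log t with hf2_def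
  -- step A : Bochner integral to lintegral
  have hInt_eq : ∫ x in Set.Ioi (t + 1), g x ∂N'.measure
      = (∫⁻ x in Set.Ioi (t + 1), ENNReal.ofReal (g x) ∂N'.measure).toReal :=
    integral_eq_lintegral_of_nonneg_ae hg_nn hg_meas.aestronglyMeasurable
  -- step B : layer cake
  have hlayer : ∫⁻ x in Set.Ioi (t + 1), ENNReal.ofReal (g x) ∂N'.measure
      = ∫⁻ s in Set.Ioi (0 : ℝ), m s :=
    lintegral_eq_lintegral_meas_lt _ hg_nn hg_meas.aemeasurable
  -- basic facts about m
  have hm_apply : ∀ s : ℝ, m s = N'.measure ({a | s < g a} ∩ Set.Ioi (t + 1)) :=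
    fun s => Measure.restrict_apply (measurableSet_lt measurable_const hg_meas)
  -- the superlevel sets are contained in Ioc (t+1) (r s)
  have hsub : ∀ s : ℝ, 0 < s → {a | s < g a} ∩ Set.Ioi (t + 1) ⊆ Set.Ioc (t + 1) (r s) := by
    intro s hs x hx
    obtain ⟨hgx, hx'⟩ := hx
    have hx1 : t + 1 < x := hx'
    have hx0 : 0 ≤ x := by linarith
    have h2 : 0 < x ^ 2 - t ^ 2 := by nlinarith
    have hgx' : s < 1 / (x ^ 2 - t ^ 2) := hgx
    have h3 : x ^ 2 - t ^ 2 < 1 / s := by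
      rw [lt_div_iff₀ hs]
      have := (lt_div_iff₀ h2).mp hgx'
      linarith [this]
    refine ⟨hx1, ?_⟩
    exact Real.le_sqrt_of_sq_le (by linarith)
  -- generic bound : m s ≤ ofReal (N' (r s) - N' (t+1))
  have hm_bound : ∀ s : ℝ, 0 < s → m s ≤ ENNReal.ofReal (N' (r s) - N' (t + 1)) := by
    intro s hs
    rw [hm_apply s, ← N'.measure_Ioc (t + 1) (r s)]
    exact measure_mono (hsub s hs)
  -- common facts about r
  have hr2' : ∀ s : ℝ, 0 < s → r s ^ 2 = t ^ 2 + 1 / s := by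
    intro s hs
    rw [hr_def]
    exact Real.sq_sqrt (by positivity)
  have hrt' : ∀ s : ℝ, 0 < s → t ≤ r s := by
    intro s hs
    rw [hr_def]
    calc t = Real.sqrt (t ^ 2) := (Real.sqrt_sq ht1.le).symm
      _ ≤ Real.sqrt (t ^ 2 + 1 / s) := Real.sqrt_le_sqrt (by
          have : 0 < 1 / s := by positivity
          linarith)
  have hr4π : ∀ s : ℝ, 0 < s → 4 * π ≤ r s := by
    intro s hs
    have := hrt' s hs
    nlinarith
  have hr1 : ∀ s : ℝ, 0 < s → 1 ≤ r s := by
    intro s hs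
    have := hrt' s hs
    linarith
  have hlogr_nn : ∀ s : ℝ, 0 < s → 0 ≤ Real.log (r s) :=
    fun s hs => Real.log_nonneg (hr1 s hs)
  have hlog2 : Real.log 2 ≤ 1 := by linarith [Real.log_two_lt_d9]
  -- region 1 bound
  have hreg1 : ∀ s ∈ Set.Ioc (0 : ℝ) s1, m s ≤ ENNReal.ofReal (f1 s) := by
    intro s hs
    obtain ⟨hs0, hss1⟩ := hs
    have hinv : t ^ 2 ≤ 1 / s := by
      rw [le_div_iff₀ hs0]
      calc t ^ 2 * s ≤ t ^ 2 * s1 := mul_le_mul_of_nonneg_left hss1 (sq_nonneg t)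
        _ = 1 := by rw [hs1_def]; field_simp
    have hrle : r s ≤ Real.sqrt 2 * s ^ (-(1/2) : ℝ) := by
      have h1 : r s ≤ Real.sqrt (2 / s) := by
        rw [hr_def]
        apply Real.sqrt_le_sqrt
        have h2 : (2:ℝ) / s = 1 / s + 1 / s := by ring
        rw [h2]
        linarith
      calc r s ≤ Real.sqrt (2 / s) := h1
        _ = Real.sqrt 2 * s ^ (-(1/2) : ℝ) := by
            rw [show (2:ℝ) / s = 2 * s⁻¹ by ring, Real.sqrt_mul (by norm_num) s⁻¹,
              Real.sqrt_inv, Real.sqrt_eq_rpow s, ← Real.rpow_neg hs0.le]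
    have hu0 : 0 < 1 / (s * t ^ 2) := by positivity
    have hlogr : Real.log (r s) ≤ 2 * Real.log t + 2 * t ^ (-(1/2) : ℝ) * s ^ (-(1/4) : ℝ) := by
      have e0 : Real.log (r s) = Real.log (t ^ 2 + 1 / s) / 2 := by
        rw [hr_def]
        exact Real.log_sqrt (by positivity)
      have e1 : Real.log (t ^ 2 + 1 / s) ≤ Real.log (2 / s) := by
        apply Real.log_le_log (by positivity)
        rw [show (2:ℝ) / s = 1 / s + 1 / s by ring]
        linarith
      have e2 : Real.log (2 / s) = Real.log 2 + Real.log (1 / s) := by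
        rw [show (2:ℝ) / s = 2 * (1 / s) by ring]
        exact Real.log_mul (by norm_num) (by positivity)
      have e3 : Real.log (1 / s) = 2 * Real.log t + Real.log (1 / (s * t ^ 2)) := by
        rw [show (1:ℝ) / s = t ^ 2 * (1 / (s * t ^ 2)) by field_simp]
        rw [Real.log_mul (by positivity) (ne_of_gt hu0), Real.log_pow]
        norm_num
      have e4 : Real.log (1 / (s * t ^ 2)) ≤ 4 * ((1 / (s * t ^ 2)) ^ ((1:ℝ)/4)) := by
        have h5 : Real.log ((1 / (s * t ^ 2)) ^ ((1:ℝ)/4))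
            ≤ (1 / (s * t ^ 2)) ^ ((1:ℝ)/4) - 1 :=
          Real.log_le_sub_one_of_pos (Real.rpow_pos_of_pos hu0 _)
        rw [Real.log_rpow hu0] at h5
        linarith
      have e5 : (1 / (s * t ^ 2)) ^ ((1:ℝ)/4) = t ^ (-(1/2) : ℝ) * s ^ (-(1/4) : ℝ) := by
        rw [show (1:ℝ) / (s * t ^ 2) = s⁻¹ * (t ^ 2)⁻¹ by field_simp]
        rw [Real.mul_rpow (by positivity) (by positivity)]
        rw [← Real.rpow_neg_one s, ← Real.rpow_neg_one (t ^ 2), ← Real.rpow_natCast t 2,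
          ← Real.rpow_mul hs0.le, ← Real.rpow_mul ht1.le, ← Real.rpow_mul ht1.le]
        norm_num
        ring
      rw [e5] at e4
      linarith
    have hN := nprime_upper_bound N' R C hC hmain hR (hr4π s hs0)
    have hstep1 : (r s / (2 * π) + C) * Real.log (r s)
        ≤ ((1 / (2 * π) + C) * r s) * Real.log (r s) := by
      apply mul_le_mul_of_nonneg_right ?_ (hlogr_nn s hs0)
      have h1r := hr1 s hs0
      have hCr : C * 1 ≤ C * r s := mul_le_mul_of_nonneg_left h1r hC.le
      have he : r s / (2 * π) = 1 / (2 * π) * r s := by ring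
      rw [he]
      linarith
    have hstep2 : ((1 / (2 * π) + C) * r s) * Real.log (r s)
        ≤ ((1 / (2 * π) + C) * (Real.sqrt 2 * s ^ (-(1/2) : ℝ)))
          * (2 * Real.log t + 2 * t ^ (-(1/2) : ℝ) * s ^ (-(1/4) : ℝ)) := by
      apply mul_le_mul ?_ hlogr (hlogr_nn s hs0) (by positivity)
      exact mul_le_mul_of_nonneg_left hrle (by positivity)
    have hmulpow : s ^ (-(1/2) : ℝ) * s ^ (-(1/4) : ℝ) = s ^ (-(3/4) : ℝ) := by
      rw [← Real.rpow_add hs0]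
      norm_num
    have hsqrt2 : Real.sqrt 2 < 1.5 := by
      apply (Real.sqrt_lt' (by norm_num)).mpr
      norm_num
    have hco : 2 * Real.sqrt 2 * (1 / (2 * π) + C) ≤ 3 * (1 + C) := by
      have h6 : (0:ℝ) ≤ 3 - 2 * Real.sqrt 2 := by linarith
      have h7 : 1 / (2 * π) + C ≤ 1 + C := by
        have h8 : 1 / (2 * π) ≤ 1 := by
          rw [div_le_one (by positivity)]
          linarith
        linarith
      nlinarith [mul_nonneg h6 (by positivity : (0:ℝ) ≤ 1 / (2 * π) + C)]
    have hstep3 : ((1 / (2 * π) + C) * (Real.sqrt 2 * s ^ (-(1/2) : ℝ)))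
        * (2 * Real.log t + 2 * t ^ (-(1/2) : ℝ) * s ^ (-(1/4) : ℝ)) ≤ f1 s := by
      rw [hf1_def]
      have expand : ((1 / (2 * π) + C) * (Real.sqrt 2 * s ^ (-(1/2) : ℝ)))
          * (2 * Real.log t + 2 * t ^ (-(1/2) : ℝ) * s ^ (-(1/4) : ℝ))
          = (2 * Real.sqrt 2 * (1 / (2 * π) + C))
            * (Real.log t * s ^ (-(1/2) : ℝ)
              + t ^ (-(1/2) : ℝ) * (s ^ (-(1/2) : ℝ) * s ^ (-(1/4) : ℝ))) := by
        ring
      rw [expand, hmulpow]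
      exact mul_le_mul_of_nonneg_right hco (by positivity)
    refine le_trans (hm_bound s hs0) (ENNReal.ofReal_le_ofReal ?_)
    have hNr := N'.mono h4πt
    linarith [hN, hstep1, hstep2, hstep3, hN0]
  -- region 2 bound
  have hreg2 : ∀ s ∈ Set.Ioc s1 S, m s ≤ ENNReal.ofReal (f2 s) := by
    intro s hs
    obtain ⟨hs1lt, hsS⟩ := hs
    have hs0 : 0 < s := lt_trans hs10 hs1lt
    have h1s : 1 / s ≤ t ^ 2 := by
      rw [div_le_iff₀ hs0]
      have h := mul_le_mul_of_nonneg_left hs1lt.le (sq_nonneg t)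
      rw [hs1_def, mul_inv_cancel₀ (by positivity)] at h
      linarith
    have hr2 := hr2' s hs0
    have hrt := hrt' s hs0
    have hrle2t : r s ≤ 2 * t := by
      rw [hr_def, show 2 * t = Real.sqrt ((2 * t) ^ 2) from (Real.sqrt_sq (by positivity)).symm]
      apply Real.sqrt_le_sqrt
      nlinarith
    have hlogr2 : Real.log (r s) ≤ Real.log 2 + Real.log t := by
      calc Real.log (r s) ≤ Real.log (2 * t) := Real.log_le_log (by linarith) hrle2t
        _ = Real.log 2 + Real.log t := Real.log_mul (by norm_num) ht1.ne'
    have hf2nn : 0 ≤ f2 s := by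
      rw [hf2_def]
      have : 0 ≤ 3 * Real.log t / (4 * π * t) * s⁻¹ := by
        apply mul_nonneg (div_nonneg (by linarith) (by positivity)) (by positivity)
      have h9 : 0 ≤ 4 * C * Real.log t := by positivity
      linarith
    refine le_trans (hm_bound s hs0) (ENNReal.ofReal_le_ofReal ?_)
    by_cases hcase : r s ≤ t + 1
    · have hmono : N' (r s) ≤ N' (t + 1) := N'.mono hcase
      linarith
    · push_neg at hcase
      have hd := nprime_diff_bound N' R C hC hmain hR h4πt hcase.le
      have hkey : (r s - t) * (2 * t) ≤ 1 / s := by nlinarith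
      have hrt2 : r s - (t + 1) ≤ (1 / s) / (2 * t) := by
        rw [le_div_iff₀ (by positivity)]
        nlinarith
      have hlog1 : Real.log (r s) + 1 ≤ 2 * Real.log t := by linarith
      have hA0 : 0 ≤ r s - (t + 1) := by linarith
      have hprod : (r s - (t + 1)) * (Real.log (r s) + 1)
          ≤ ((1 / s) / (2 * t)) * (2 * Real.log t) := by
        apply mul_le_mul hrt2 hlog1 (by linarith [hlogr_nn s hs0]) (by positivity)
      have hdiv : (r s - (t + 1)) * (Real.log (r s) + 1) / (2 * π)
          ≤ ((1 / s) / (2 * t)) * (2 * Real.log t) / (2 * π) :=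
        div_le_div_of_nonneg_right hprod (by positivity)
      have hcmp : ((1 / s) / (2 * t)) * (2 * Real.log t) / (2 * π)
          ≤ 3 * Real.log t / (4 * π * t) * s⁻¹ := by
        have eL : ((1 / s) / (2 * t)) * (2 * Real.log t) / (2 * π)
            = Real.log t / (2 * π * t * s) := by
          field_simp
        have eR : 3 * Real.log t / (4 * π * t) * s⁻¹ = 3 * Real.log t / (4 * π * t * s) := by
          field_simp
        rw [eL, eR, div_le_div_iff₀ (by positivity) (by positivity)]
        nlinarith [mul_nonneg (mul_nonneg (mul_nonneg hlt0.le hπ.le) ht1.le) hs0.le]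
      have h2C : 2 * C * Real.log (r s) ≤ 4 * C * Real.log t := by
        have h10 : Real.log (r s) ≤ 2 * Real.log t := by linarith
        have := mul_le_mul_of_nonneg_left h10 (by linarith : (0:ℝ) ≤ 2 * C)
        linarith
      rw [hf2_def]
      linarith [hd, hdiv, hcmp, h2C]
  -- region 3 : m vanishes
  have hreg3 : ∀ s ∈ Set.Ioi S, m s = 0 := by
    intro s hs
    have hs' : S < s := hs
    rw [hm_apply s]
    convert measure_empty
    · rw [Set.eq_empty_iff_forall_notMem]
      rintro x ⟨hgx, hx⟩
      have hx1 : t + 1 < x := hx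
      have h2 : 2 * t + 1 < x ^ 2 - t ^ 2 := by nlinarith
      have hgx' : s < 1 / (x ^ 2 - t ^ 2) := hgx
      have : 1 / (x ^ 2 - t ^ 2) < 1 / (2 * t + 1) := by
        apply one_div_lt_one_div_of_lt (by positivity) h2
      rw [hS_def] at hs'
      rw [← one_div] at hs'
      linarith
    · infer_instance
  -- split the lintegral
  have hsplit : ∫⁻ s in Set.Ioi (0 : ℝ), m s
      = (∫⁻ s in Set.Ioc 0 s1, m s) + (∫⁻ s in Set.Ioc s1 S, m s)
        + (∫⁻ s in Set.Ioi S, m s) := by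
    rw [← Set.Ioc_union_Ioi_eq_Ioi (hs10.le.trans hs1S),
      ← Set.Ioc_union_Ioc_eq_Ioc hs10.le hs1S]
    have hd1 : Disjoint (Set.Ioc (0:ℝ) s1 ∪ Set.Ioc s1 S) (Set.Ioi S) := by
      rw [Set.Ioc_union_Ioc_eq_Ioc hs10.le hs1S]
      exact Set.Ioc_disjoint_Ioi_same
    rw [lintegral_union measurableSet_Ioi hd1,
      lintegral_union measurableSet_Ioc (Set.Ioc_disjoint_Ioc_of_le le_rfl)]
  -- third piece vanishes
  have hP3 : ∫⁻ s in Set.Ioi S, m s = 0 := by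
    rw [setLIntegral_congr_fun measurableSet_Ioi hreg3]
    simp
  -- first piece
  have h1ii : IntervalIntegrable (fun s : ℝ => s ^ (-(1/2) : ℝ)) volume 0 s1 :=
    intervalIntegral.intervalIntegrable_rpow' (by norm_num)
  have h2ii : IntervalIntegrable (fun s : ℝ => s ^ (-(3/4) : ℝ)) volume 0 s1 :=
    intervalIntegral.intervalIntegrable_rpow' (by norm_num)
  have hf1_ii : IntervalIntegrable f1 volume 0 s1 := by
    rw [hf1_def]
    exact ((h1ii.const_mul _).add (h2ii.const_mul _)).const_mul _
  have hf1_int : IntegrableOn f1 (Set.Ioc 0 s1) :=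
    (intervalIntegrable_iff_integrableOn_Ioc_of_le hs10.le).mp hf1_ii
  have hf1_nnae : 0 ≤ᵐ[volume.restrict (Set.Ioc (0:ℝ) s1)] f1 := by
    refine (ae_restrict_iff' measurableSet_Ioc).mpr (ae_of_all _ fun s hs => ?_)
    have hs0 : 0 < s := hs.1
    show (0:ℝ) ≤ f1 s
    rw [hf1_def]
    positivity
  have hP1 : ∫⁻ s in Set.Ioc (0:ℝ) s1, m s
      ≤ ENNReal.ofReal (∫ s in Set.Ioc (0:ℝ) s1, f1 s) := by
    calc ∫⁻ s in Set.Ioc (0:ℝ) s1, m s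
        ≤ ∫⁻ s in Set.Ioc (0:ℝ) s1, ENNReal.ofReal (f1 s) :=
          setLIntegral_mono' measurableSet_Ioc hreg1
      _ = ENNReal.ofReal (∫ s in Set.Ioc (0:ℝ) s1, f1 s) :=
          (ofReal_integral_eq_lintegral_ofReal hf1_int hf1_nnae).symm
  -- second piece
  have hinv_ii : IntervalIntegrable (fun s : ℝ => s⁻¹) volume s1 S := by
    apply intervalIntegral.intervalIntegrable_inv
    · intro x hx
      have := hx.1
      rw [inf_eq_left.mpr hs1S] at this
      exact (lt_of_lt_of_le hs10 this).ne'
    · exact continuousOn_id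
  have hf2_ii : IntervalIntegrable f2 volume s1 S := by
    rw [hf2_def]
    exact (hinv_ii.const_mul _).add intervalIntegrable_const
  have hf2_int : IntegrableOn f2 (Set.Ioc s1 S) :=
    (intervalIntegrable_iff_integrableOn_Ioc_of_le hs1S).mp hf2_ii
  have hf2_nnae : 0 ≤ᵐ[volume.restrict (Set.Ioc s1 S)] f2 := by
    refine (ae_restrict_iff' measurableSet_Ioc).mpr (ae_of_all _ fun s hs => ?_)
    have hs0 : 0 < s := lt_trans hs10 hs.1
    show (0:ℝ) ≤ f2 s
    rw [hf2_def]
    positivity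
  have hP2 : ∫⁻ s in Set.Ioc s1 S, m s
      ≤ ENNReal.ofReal (∫ s in Set.Ioc s1 S, f2 s) := by
    calc ∫⁻ s in Set.Ioc s1 S, m s
        ≤ ∫⁻ s in Set.Ioc s1 S, ENNReal.ofReal (f2 s) :=
          setLIntegral_mono' measurableSet_Ioc hreg2
      _ = ENNReal.ofReal (∫ s in Set.Ioc s1 S, f2 s) :=
          (ofReal_integral_eq_lintegral_ofReal hf2_int hf2_nnae).symm
  -- values of the two integrals
  have hI1 : ∫ s in Set.Ioc (0:ℝ) s1, f1 s = 3 * (1 + C) * (2 * Real.log t + 4) / t := by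
    have e1 : s1 ^ ((1:ℝ)/2) = t⁻¹ := by
      rw [hs1_def, ← Real.rpow_natCast t 2, ← Real.rpow_neg_one (t ^ ((2:ℕ):ℝ)),
        ← Real.rpow_mul ht1.le, ← Real.rpow_mul ht1.le]
      norm_num
      exact (Real.rpow_neg_one t).trans rfl
    have e2 : s1 ^ ((1:ℝ)/4) = t ^ (-(1/2) : ℝ) := by
      rw [hs1_def, ← Real.rpow_natCast t 2, ← Real.rpow_neg_one (t ^ ((2:ℕ):ℝ)),
        ← Real.rpow_mul ht1.le, ← Real.rpow_mul ht1.le]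
      norm_num
    have e3 : t ^ (-(1/2) : ℝ) * t ^ (-(1/2) : ℝ) = t⁻¹ := by
      rw [← Real.rpow_add ht1, ← Real.rpow_neg_one t]
      norm_num
    rw [← intervalIntegral.integral_of_le hs10.le, hf1_def]
    rw [intervalIntegral.integral_const_mul,
      intervalIntegral.integral_add (h1ii.const_mul _) (h2ii.const_mul _),
      intervalIntegral.integral_const_mul, intervalIntegral.integral_const_mul,
      integral_rpow (Or.inl (by norm_num)), integral_rpow (Or.inl (by norm_num))]
    norm_num
    rw [e1, e2]
    linear_combination (12 * (1 + C)) * e3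
  have hI2 : ∫ s in Set.Ioc s1 S, f2 s
      = 3 * Real.log t / (4 * π * t) * Real.log (S / s1) + 4 * C * Real.log t * (S - s1) := by
    rw [← intervalIntegral.integral_of_le hs1S, hf2_def]
    rw [intervalIntegral.integral_add (hinv_ii.const_mul _) intervalIntegrable_const,
      intervalIntegral.integral_const_mul, intervalIntegral.integral_const,
      integral_inv_of_pos hs10 hS0, smul_eq_mul]
    ring
  -- final numeric bound
  have hfinal : 3 * (1 + C) * (2 * Real.log t + 4) / t
      + (3 * Real.log t / (4 * π * t) * Real.log (S / s1) + 4 * C * Real.log t * (S - s1))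
      ≤ 20 * (1 + C) * (Real.log t) ^ 2 / t := by
    have hq : (0:ℝ) ≤ 1 + C := by linarith
    have hL2 : (0:ℝ) ≤ Real.log t - 2 := by linarith
    have h1 : 3 * (1 + C) * (2 * Real.log t + 4) / t
        ≤ 8 * (1 + C) * (Real.log t) ^ 2 / t := by
      apply div_le_div_of_nonneg_right ?_ ht1.le
      nlinarith [mul_nonneg (mul_nonneg hq hL2) hlt0.le, mul_nonneg hq hL2]
    have hSs1 : S / s1 = t ^ 2 / (2 * t + 1) := by
      rw [hS_def, hs1_def]
      field_simp
    have hlogSs1 : Real.log (S / s1) ≤ Real.log t := by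
      rw [hSs1]
      apply Real.log_le_log (by positivity)
      rw [div_le_iff₀ (by positivity)]
      nlinarith
    have hlogSs1' : 0 ≤ Real.log (S / s1) :=
      Real.log_nonneg ((one_le_div hs10).mpr hs1S)
    have hcoef : 0 ≤ 3 * Real.log t / (4 * π * t) :=
      div_nonneg (by linarith) (by positivity)
    have h2 : 3 * Real.log t / (4 * π * t) * Real.log (S / s1)
        ≤ (1 + C) * (Real.log t) ^ 2 / t := by
      calc 3 * Real.log t / (4 * π * t) * Real.log (S / s1)
          ≤ 3 * Real.log t / (4 * π * t) * Real.log t :=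
            mul_le_mul_of_nonneg_left hlogSs1 hcoef
        _ ≤ (1 + C) * (Real.log t) ^ 2 / t := by
            rw [div_mul_eq_mul_div, div_le_div_iff₀ (by positivity) ht1]
            nlinarith [mul_nonneg (mul_nonneg (mul_nonneg hC.le (sq_nonneg (Real.log t))) ht1.le) hπ.le,
              mul_nonneg (mul_nonneg (sq_nonneg (Real.log t)) ht1.le) (by linarith : (0:ℝ) ≤ π - 3)]
    have hS2t : S ≤ (2 * t)⁻¹ := by
      rw [hS_def]
      apply inv_anti₀ (by positivity)
      linarith
    have hCL : 0 ≤ 4 * C * Real.log t := by positivity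
    have h3 : 4 * C * Real.log t * (S - s1) ≤ 2 * (1 + C) * (Real.log t) ^ 2 / t := by
      calc 4 * C * Real.log t * (S - s1) ≤ 4 * C * Real.log t * (2 * t)⁻¹ := by
            apply mul_le_mul_of_nonneg_left _ hCL
            linarith
        _ ≤ 2 * (1 + C) * (Real.log t) ^ 2 / t := by
            rw [inv_eq_one_div, mul_one_div, div_le_div_iff₀ (by positivity) ht1]
            nlinarith [mul_nonneg (mul_nonneg (mul_nonneg hC.le hL2) hlt0.le) ht1.le,
              mul_nonneg (mul_nonneg hL2 hlt0.le) ht1.le]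
    calc 3 * (1 + C) * (2 * Real.log t + 4) / t
        + (3 * Real.log t / (4 * π * t) * Real.log (S / s1) + 4 * C * Real.log t * (S - s1))
        ≤ 8 * (1 + C) * (Real.log t) ^ 2 / t
          + ((1 + C) * (Real.log t) ^ 2 / t + 2 * (1 + C) * (Real.log t) ^ 2 / t) :=
          add_le_add h1 (add_le_add h2 h3)
      _ = 11 * (1 + C) * (Real.log t) ^ 2 / t := by ring
      _ ≤ 20 * (1 + C) * (Real.log t) ^ 2 / t := by
          apply div_le_div_of_nonneg_right ?_ ht1.le
          nlinarith [mul_nonneg hq (sq_nonneg (Real.log t))]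
  have hf1_intnn : 0 ≤ ∫ s in Set.Ioc (0:ℝ) s1, f1 s := by
    apply setIntegral_nonneg measurableSet_Ioc
    intro s hs
    have hs0 : 0 < s := hs.1
    rw [hf1_def]
    positivity
  have hf2_intnn : 0 ≤ ∫ s in Set.Ioc s1 S, f2 s := by
    apply setIntegral_nonneg measurableSet_Ioc
    intro s hs
    have hs0 : 0 < s := lt_trans hs10 hs.1
    rw [hf2_def]
    positivity
  -- assemble
  have hmain_le : ∫⁻ s in Set.Ioi (0 : ℝ), m s
      ≤ ENNReal.ofReal (20 * (1 + C) * (Real.log t) ^ 2 / t) := by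
    rw [hsplit, hP3, add_zero]
    calc (∫⁻ s in Set.Ioc 0 s1, m s) + (∫⁻ s in Set.Ioc s1 S, m s)
        ≤ ENNReal.ofReal (∫ s in Set.Ioc (0:ℝ) s1, f1 s)
          + ENNReal.ofReal (∫ s in Set.Ioc s1 S, f2 s) := add_le_add hP1 hP2
      _ = ENNReal.ofReal ((∫ s in Set.Ioc (0:ℝ) s1, f1 s) + ∫ s in Set.Ioc s1 S, f2 s) := by
          rw [ENNReal.ofReal_add hf1_intnn hf2_intnn]
      _ ≤ ENNReal.ofReal (20 * (1 + C) * (Real.log t) ^ 2 / t) := by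
          apply ENNReal.ofReal_le_ofReal
          rw [hI1, hI2]; exact hfinal
  show ∫ x in Set.Ioi (t + 1), g x ∂N'.measure ≤ 20 * (1 + C) * (Real.log t) ^ 2 / t
  rw [hInt_eq, hlayer]
  exact ENNReal.toReal_le_of_le_ofReal (by positivity) hmain_le
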